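/- Let F : Finset ℕ → ℕ be asymptotically stable, and suppose D₁ ⊆ D₂ ⊆ D₃ ⊆ ... is a chain of colorings, where each D_i colors the d-element subsets of {0,...,i} with k colors, such that for every i, every D_i-homogeneous set H ⊆ {0,...,i} satisfies |H| ≤ F(H). Then the union coloring D = ⋃ D_i of all d-element subsets of ℕ has no infinite homogeneous set. -/
import Mathlib


/-- `H` is homogeneous for the colouring `C` of `d`-element finite sets:
`C` is constant on the `d`-element subsets of `H`. -/
def HomogF (k d : ℕ) (C : Finset ℕ → Fin k) (H : Finset ℕ) : Prop :=
  ∃ c : Fin k, ∀ s : Finset ℕ, s ⊆ H → s.card = d → C s = c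

/-- Homogeneity for a (possibly infinite) set `H ⊆ ℕ`. -/
def HomogS (k d : ℕ) (C : Finset ℕ → Fin k) (H : Set ℕ) : Prop :=
  ∃ c : Fin k, ∀ s : Finset ℕ, ↑s ⊆ H → s.card = d → C s = c

/-- `F` is asymptotically stable: on every increasing chain of finite sets
the value of `F` eventually stabilises. -/
def AsympStable (F : Finset ℕ → ℕ) : Prop :=
  ∀ X : ℕ → Finset ℕ, (∀ i, X i ⊆ X (i + 1)) →
    ∃ i, ∀ j, i ≤ j → F (X j) = F (X i)

theorem union_coloring_no_infinite_homogeneous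
    (d k : ℕ) (F : Finset ℕ → ℕ) (hF : AsympStable F)
    (D : ℕ → Finset ℕ → Fin k)
    (hchain : ∀ i, ∀ s : Finset ℕ, s ⊆ Finset.range (i + 1) → D (i + 1) s = D i s)
    (hbound : ∀ i, ∀ H : Finset ℕ, H ⊆ Finset.range (i + 1) →
      HomogF k d (D i) H → H.card ≤ F H)
    (Dlim : Finset ℕ → Fin k)
    (hDlim : ∀ i, ∀ s : Finset ℕ, s ⊆ Finset.range (i + 1) → Dlim s = D i s) :
    ∀ H : Set ℕ, HomogS k d Dlim H → H.Finite := by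
  intro H hH
  by_contra hInf
  replace hInf : H.Infinite := hInf
  classical
  obtain ⟨c, hc⟩ := hH
  -- increasing chain of finite subsets of H
  set X : ℕ → Finset ℕ := fun n => (Finset.range n).filter (· ∈ H) with hX
  have hmono : ∀ m n, m ≤ n → X m ⊆ X n := by
    intro m n hmn
    exact Finset.filter_subset_filter _ (Finset.range_subset_range.2 hmn)
  obtain ⟨i, hi⟩ := hF X (fun n => hmono n (n + 1) (Nat.le_succ n))
  -- each X n is homogeneous, hence card bounded
  have hcard : ∀ n, (X n).card ≤ F (X n) := by
    intro n
    have hsub : X n ⊆ Finset.range (n + 1) :=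
      (Finset.filter_subset _ _).trans (Finset.range_subset_range.2 (Nat.le_succ n))
    refine hbound n (X n) hsub ⟨c, ?_⟩
    intro s hs hsd
    rw [← hDlim n s (hs.trans hsub)]
    refine hc s ?_ hsd
    intro x hx
    exact (Finset.mem_filter.1 (hs hx)).2
  -- get F (X i) + 1 elements of H
  obtain ⟨T, hTH, hTcard⟩ := hInf.exists_subset_card_eq (F (X i) + 1)
  -- bound on elements of T
  obtain ⟨b, hb⟩ : ∃ b, ∀ x ∈ T, x < b := by
    refine ⟨(T.sup id) + 1, fun x hx => ?_⟩
    exact Nat.lt_succ_of_le (Finset.le_sup (f := id) hx)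
  set m := max i b with hm
  have hTX : T ⊆ X m := by
    intro x hx
    exact Finset.mem_filter.2 ⟨Finset.mem_range.2 (lt_of_lt_of_le (hb x hx) (le_max_right i b)),
      hTH hx⟩
  have h1 : F (X i) + 1 ≤ (X m).card := hTcard ▸ Finset.card_le_card hTX
  have h2 : (X m).card ≤ F (X i) := (hcard m).trans (le_of_eq (hi m (le_max_left i b)))
  omega
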